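/- Let q ≥ 3 be an integer and β > 1 a real, and set β̂ = 1 + (β−1)²/((q−1)(2β+q−2)), γ̂ = 1 + (β−1)²/(2β+q−2), λ̂ = 1/(q−1), ω(B) = (1 + β̂γ̂ − β̂B − γ̂/B)/(1 − β̂γ̂) and θ(B) = 2β(B−1)(B+q−1)/(B(β−1)(β+q−1)). Let I be a nondegenerate closed interval contained in (1, γ̂). Then there do not exist K, L ∈ ℝ such that for all x₁, x₂ ∈ I the equation K·log(r) + L = θ(r) − ω(r)·(K·log(x₁) + K·log(x₂) + 2L) holds, where r = (1 + γ̂λ̂x₁x₂)/(β̂ + λ̂x₁x₂). In other words, no function of the form F(x) = K·log(x) + L can satisfy F(r(x₁,x₂)) = θ(r(x₁,x₂)) − ω(r(x₁,x₂))(F(x₁) + F(x₂)) for all x₁, x₂ ∈ I. -/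

import Mathlib

/-- `ω(B) = (1 + β̂γ̂ − β̂B − γ̂/B)/(1 − β̂γ̂)`. -/
noncomputable def omegaP (βh γh B : ℝ) : ℝ := (1 + βh * γh - βh * B - γh / B) / (1 - βh * γh)

/-- `θ(B) = 2β(B−1)(B+q−1)/(B(β−1)(β+q−1))`. -/
noncomputable def thetaP (q : ℕ) (β B : ℝ) : ℝ :=
  2 * β * (B - 1) * (B + q - 1) / (B * (β - 1) * (β + q - 1))

noncomputable def myF0 (A G K L V cp qr : ℝ) : ℝ → ℝ := fun z =>
  (A*G-1)*K*(z*Real.log z) - K*((A*z-1)*(G-z))*Real.log (A*z-1)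
    + K*((A*z-1)*(G-z))*Real.log (G-z)
    - (cp*((z-1)*(z+qr-1)) - (A*G-1)*L*z + (2*L-K*V)*((A*z-1)*(G-z)))

noncomputable def myF1 (A G K L V cp qr : ℝ) : ℝ → ℝ := fun z =>
  (A*G-1)*K*(Real.log z+1) - K*((A*(G-z)-(A*z-1))*Real.log (A*z-1) + A*(G-z))
    + K*((A*(G-z)-(A*z-1))*Real.log (G-z) - (A*z-1))
    - (cp*((z+qr-1)+(z-1)) - (A*G-1)*L + (2*L-K*V)*(A*(G-z)-(A*z-1)))

noncomputable def myF2 (A G K L V cp qr : ℝ) : ℝ → ℝ := fun z =>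
  (A*G-1)*K/z - K*((-2*A)*Real.log (A*z-1) + (A*(G-z)-(A*z-1))*(A/(A*z-1)) - A)
    + K*((-2*A)*Real.log (G-z) - (A*(G-z)-(A*z-1))/(G-z) - A)
    - (cp*2 + (2*L-K*V)*(-2*A))

noncomputable def myF3 (A G K L V cp qr : ℝ) : ℝ → ℝ := fun z =>
  -((A*G-1)*K)/z^2
    - K*((-2*A)*(A/(A*z-1)) + A*((-2*A*(A*z-1) - A*(A*(G-z)-(A*z-1)))/(A*z-1)^2))
    + K*(2*A/(G-z) - (-2*A*(G-z)+(A*(G-z)-(A*z-1)))/(G-z)^2)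

lemma myF0_deriv (A G K L V cp qr : ℝ) {y : ℝ} (hy : 0 < y) (h1 : 0 < A*y-1) (h2 : 0 < G-y) :
    HasDerivAt (myF0 A G K L V cp qr) (myF1 A G K L V cp qr y) y := by
  have hlogy : HasDerivAt Real.log y⁻¹ y := Real.hasDerivAt_log hy.ne'
  have hid : HasDerivAt (fun z : ℝ => z) 1 y := hasDerivAt_id' y
  have hzlog : HasDerivAt (fun z : ℝ => z * Real.log z) (1*Real.log y + y*y⁻¹) y := hid.mul hlogy
  have hl1 : HasDerivAt (fun z : ℝ => A*z-1) (A*1) y := (hid.const_mul A).sub_const 1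
  have hl2 : HasDerivAt (fun z : ℝ => G-z) (-1) y := hid.const_sub G
  have hu : HasDerivAt (fun z : ℝ => (A*z-1)*(G-z)) ((A*1)*(G-y)+(A*y-1)*(-1)) y := hl1.mul hl2
  have hlg1 : HasDerivAt (fun z : ℝ => Real.log (A*z-1)) ((A*1)/(A*y-1)) y := hl1.log h1.ne'
  have hlg2 : HasDerivAt (fun z : ℝ => Real.log (G-z)) ((-1)/(G-y)) y := hl2.log h2.ne'
  have t1 : HasDerivAt (fun z : ℝ => (A*G-1)*K*(z*Real.log z)) ((A*G-1)*K*(1*Real.log y + y*y⁻¹)) y := hzlog.const_mul _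
  have t2 : HasDerivAt (fun z : ℝ => K*((A*z-1)*(G-z))*Real.log (A*z-1))
      (K*((A*1)*(G-y)+(A*y-1)*(-1))*Real.log (A*y-1) + K*((A*y-1)*(G-y))*((A*1)/(A*y-1))) y :=
    (hu.const_mul K).mul hlg1
  have t3 : HasDerivAt (fun z : ℝ => K*((A*z-1)*(G-z))*Real.log (G-z))
      (K*((A*1)*(G-y)+(A*y-1)*(-1))*Real.log (G-y) + K*((A*y-1)*(G-y))*((-1)/(G-y))) y :=
    (hu.const_mul K).mul hlg2
  have t4 : HasDerivAt (fun z : ℝ => cp*((z-1)*(z+qr-1))) (cp*(1*(y+qr-1)+(y-1)*1)) y :=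
    (((hid.sub_const 1).mul ((hid.add_const qr).sub_const 1)).const_mul cp)
  have t5 : HasDerivAt (fun z : ℝ => (A*G-1)*L*z) ((A*G-1)*L*1) y := hid.const_mul _
  have t6 : HasDerivAt (fun z : ℝ => (2*L-K*V)*((A*z-1)*(G-z))) ((2*L-K*V)*((A*1)*(G-y)+(A*y-1)*(-1))) y := hu.const_mul _
  have big := ((t1.sub t2).add t3).sub ((t4.sub t5).add t6)
  simp only [myF0, myF1]
  refine big.congr_deriv ?_
  have hyne := hy.ne'
  have h1ne := h1.ne'
  have h2ne := h2.ne'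
  field_simp
  ring

lemma myF1_deriv (A G K L V cp qr : ℝ) {y : ℝ} (hy : 0 < y) (h1 : 0 < A*y-1) (h2 : 0 < G-y) :
    HasDerivAt (myF1 A G K L V cp qr) (myF2 A G K L V cp qr y) y := by
  have hlogy : HasDerivAt Real.log y⁻¹ y := Real.hasDerivAt_log hy.ne'
  have hid : HasDerivAt (fun z : ℝ => z) 1 y := hasDerivAt_id' y
  have hl1 : HasDerivAt (fun z : ℝ => A*z-1) (A*1) y := (hid.const_mul A).sub_const 1
  have hl2 : HasDerivAt (fun z : ℝ => G-z) (-1) y := hid.const_sub G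
  have hup : HasDerivAt (fun z : ℝ => A*(G-z)-(A*z-1)) (A*(-1)-A*1) y := (hl2.const_mul A).sub hl1
  have hlg1 : HasDerivAt (fun z : ℝ => Real.log (A*z-1)) ((A*1)/(A*y-1)) y := hl1.log h1.ne'
  have hlg2 : HasDerivAt (fun z : ℝ => Real.log (G-z)) ((-1)/(G-y)) y := hl2.log h2.ne'
  have t1 : HasDerivAt (fun z : ℝ => (A*G-1)*K*(Real.log z+1)) ((A*G-1)*K*y⁻¹) y :=
    (hlogy.add_const 1).const_mul _
  have t2 : HasDerivAt (fun z : ℝ => K*((A*(G-z)-(A*z-1))*Real.log (A*z-1) + A*(G-z)))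
      (K*(((A*(-1)-A*1)*Real.log (A*y-1) + (A*(G-y)-(A*y-1))*((A*1)/(A*y-1))) + A*(-1))) y :=
    ((hup.mul hlg1).add (hl2.const_mul A)).const_mul K
  have t3 : HasDerivAt (fun z : ℝ => K*((A*(G-z)-(A*z-1))*Real.log (G-z) - (A*z-1)))
      (K*(((A*(-1)-A*1)*Real.log (G-y) + (A*(G-y)-(A*y-1))*((-1)/(G-y))) - A*1)) y :=
    ((hup.mul hlg2).sub hl1).const_mul K
  have t4 : HasDerivAt (fun z : ℝ => cp*((z+qr-1)+(z-1)) - (A*G-1)*L + (2*L-K*V)*(A*(G-z)-(A*z-1)))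
      ((cp*(1+1) - 0) + (2*L-K*V)*(A*(-1)-A*1)) y := by
    exact ((((((hid.add_const qr).sub_const 1).add (hid.sub_const 1)).const_mul cp).sub
      (hasDerivAt_const y _)).add (hup.const_mul _))
  have big := ((t1.sub t2).add t3).sub t4
  simp only [myF1, myF2]
  refine big.congr_deriv ?_
  have hyne := hy.ne'
  have h1ne := h1.ne'
  have h2ne := h2.ne'
  field_simp
  ring

lemma myF2_deriv (A G K L V cp qr : ℝ) {y : ℝ} (hy : 0 < y) (h1 : 0 < A*y-1) (h2 : 0 < G-y) :
    HasDerivAt (myF2 A G K L V cp qr) (myF3 A G K L V cp qr y) y := by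
  have hid : HasDerivAt (fun z : ℝ => z) 1 y := hasDerivAt_id' y
  have hl1 : HasDerivAt (fun z : ℝ => A*z-1) (A*1) y := (hid.const_mul A).sub_const 1
  have hl2 : HasDerivAt (fun z : ℝ => G-z) (-1) y := hid.const_sub G
  have hup : HasDerivAt (fun z : ℝ => A*(G-z)-(A*z-1)) (A*(-1)-A*1) y := (hl2.const_mul A).sub hl1
  have hlg1 : HasDerivAt (fun z : ℝ => Real.log (A*z-1)) ((A*1)/(A*y-1)) y := hl1.log h1.ne'
  have hlg2 : HasDerivAt (fun z : ℝ => Real.log (G-z)) ((-1)/(G-y)) y := hl2.log h2.ne'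
  have t1 : HasDerivAt (fun z : ℝ => (A*G-1)*K/z) ((0*y - (A*G-1)*K*1)/y^2) y :=
    (hasDerivAt_const y _).div hid hy.ne'
  have hdiv1 : HasDerivAt (fun z : ℝ => A/(A*z-1)) ((0*(A*y-1) - A*(A*1))/(A*y-1)^2) y :=
    (hasDerivAt_const y A).div hl1 h1.ne'
  have t2 : HasDerivAt (fun z : ℝ => K*((-2*A)*Real.log (A*z-1) + (A*(G-z)-(A*z-1))*(A/(A*z-1)) - A))
      (K*(((-2*A)*((A*1)/(A*y-1)) + ((A*(-1)-A*1)*(A/(A*y-1)) + (A*(G-y)-(A*y-1))*((0*(A*y-1) - A*(A*1))/(A*y-1)^2))) - 0)) y := by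
    exact (((hlg1.const_mul (-2*A)).add (hup.mul hdiv1)).sub (hasDerivAt_const y A)).const_mul K
  have t3 : HasDerivAt (fun z : ℝ => K*((-2*A)*Real.log (G-z) - (A*(G-z)-(A*z-1))/(G-z) - A))
      (K*(((-2*A)*((-1)/(G-y)) - ((A*(-1)-A*1)*(G-y) - (A*(G-y)-(A*y-1))*(-1))/(G-y)^2) - 0)) y := by
    exact (((hlg2.const_mul (-2*A)).sub (hup.div hl2 h2.ne')).sub (hasDerivAt_const y A)).const_mul K
  have t4 : HasDerivAt (fun z : ℝ => cp*2 + (2*L-K*V)*(-2*A)) 0 y := hasDerivAt_const y _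
  have big := ((t1.sub t2).add t3).sub t4
  simp only [myF2, myF3]
  refine big.congr_deriv ?_
  have hyne := hy.ne'
  have h1ne := h1.ne'
  have h2ne := h2.ne'
  field_simp
  ring

set_option maxHeartbeats 1000000 in
/-- for the ferromagnetic Potts model, no function of the form
`F(x) = K log x + L` can satisfy the functional equation
`F(r(x₁,x₂)) = θ(r(x₁,x₂)) − ω(r(x₁,x₂))(F(x₁) + F(x₂))` on a nondegenerate closed interval
contained in `(1,γ̂)`. -/
theorem stmt_7 (q : ℕ) (hq : 3 ≤ q) (β : ℝ) (hβ : 1 < β)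
    (βh γh lamh : ℝ)
    (hβh : βh = 1 + (β - 1) ^ 2 / (((q : ℝ) - 1) * (2 * β + q - 2)))
    (hγh : γh = 1 + (β - 1) ^ 2 / (2 * β + q - 2))
    (hlamh : lamh = 1 / ((q : ℝ) - 1))
    (lo hi : ℝ) (hlohi : lo < hi) (hI : Set.Icc lo hi ⊆ Set.Ioo 1 γh) :
    ¬ ∃ K L : ℝ, ∀ x₁ ∈ Set.Icc lo hi, ∀ x₂ ∈ Set.Icc lo hi,
      K * Real.log ((1 + γh * lamh * x₁ * x₂) / (βh + lamh * x₁ * x₂)) + L =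
        thetaP q β ((1 + γh * lamh * x₁ * x₂) / (βh + lamh * x₁ * x₂)) -
          omegaP βh γh ((1 + γh * lamh * x₁ * x₂) / (βh + lamh * x₁ * x₂)) *
            (K * Real.log x₁ + K * Real.log x₂ + 2 * L) := by
  rintro ⟨K, L, H⟩
  have hq3 : (3:ℝ) ≤ (q:ℝ) := by exact_mod_cast hq
  have hd1 : (0:ℝ) < (q:ℝ) - 1 := by linarith
  have hd2 : (0:ℝ) < 2*β + (q:ℝ) - 2 := by linarith
  have hb1 : (0:ℝ) < β - 1 := by linarith
  have hbq : (0:ℝ) < β + (q:ℝ) - 1 := by linarith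
  have hsq : 0 < (β-1)^2 := pow_pos hb1 2
  have hA1 : 1 < βh := by
    rw [hβh]; have := div_pos hsq (mul_pos hd1 hd2); linarith
  have hG1 : 1 < γh := by
    rw [hγh]; have := div_pos hsq hd2; linarith
  have hlam : 0 < lamh := by rw [hlamh]; positivity
  have hAG : 1 < βh*γh := by nlinarith
  have hlo1 : 1 < lo := (hI ⟨le_rfl, hlohi.le⟩).1
  have hhiG : hi < γh := (hI ⟨hlohi.le, le_rfl⟩).2
  have hlo0 : 0 < lo := by linarith
  have hkey : βh - 1 = lamh * (γh - 1) := by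
    rw [hβh, hγh, hlamh]; field_simp; ring
  obtain ⟨V, hV⟩ : ∃ V : ℝ, V = Real.log lamh := ⟨_, rfl⟩
  obtain ⟨cp, hcp_def⟩ : ∃ cp : ℝ, cp = 2*(βh*γh-1)*β/((β-1)*(β+(q:ℝ)-1)) := ⟨_, rfl⟩
  have hcp : 0 < cp := by
    rw [hcp_def]
    exact div_pos (by nlinarith) (mul_pos hb1 hbq)
  set g : ℝ → ℝ := fun x => (1 + γh * lamh * x * x) / (βh + lamh * x * x) with hg
  have hdenpos : ∀ x : ℝ, 0 < βh + lamh * x * x := by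
    intro x
    have : 0 ≤ lamh * x * x := by
      rw [mul_assoc]; exact mul_nonneg hlam.le (mul_self_nonneg x)
    linarith
  have hB0 : 1 < g lo := by
    rw [hg]; simp only
    rw [lt_div_iff₀ (hdenpos lo)]
    have h1 : 1 < lo * lo := by nlinarith
    nlinarith [mul_pos hlam (sub_pos.2 hG1)]
  have hB1G : g hi < γh := by
    rw [hg]; simp only
    rw [div_lt_iff₀ (hdenpos hi)]
    nlinarith
  have hB01 : g lo < g hi := by
    rw [hg]; simp only
    rw [div_lt_div_iff₀ (hdenpos lo) (hdenpos hi)]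
    have h2 : lo*lo < hi*hi := by nlinarith
    nlinarith [mul_pos (mul_pos hlam (sub_pos.2 h2)) (sub_pos.2 hAG)]
  have hcont : ContinuousOn g (Set.Icc lo hi) := by
    apply ContinuousOn.div
    · fun_prop
    · fun_prop
    · intro x _; exact (hdenpos x).ne'
  have hsurj := intermediate_value_Icc hlohi.le hcont
  -- pointwise base identity
  have E0 : ∀ y ∈ Set.Icc (g lo) (g hi), myF0 βh γh K L V cp (q:ℝ) y = 0 := by
    rintro y ⟨hy0, hy1⟩
    obtain ⟨x, hx, hgx⟩ := hsurj ⟨hy0, hy1⟩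
    have hy_gt1 : 1 < y := lt_of_lt_of_le hB0 hy0
    have hyG : y < γh := lt_of_le_of_lt hy1 hB1G
    have hl1 : 0 < βh*y - 1 := by nlinarith [hA1, hy_gt1, mul_lt_mul_of_pos_left hy_gt1 (by linarith : (0:ℝ) < βh)]
    have hl2 : 0 < γh - y := by linarith
    have hx1 : 1 < x := lt_of_lt_of_le hlo1 hx.1
    have hx0 : 0 < x := by linarith
    have hdp := hdenpos x
    have hgx' : (1 + γh * lamh * x * x) / (βh + lamh * x * x) = y := hgx
    have hgx2 : 1 + γh * lamh * x * x = y * (βh + lamh * x * x) :=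
      (div_eq_iff hdp.ne').1 hgx'
    have hW : Real.log x + Real.log x = Real.log (βh*y-1) - V - Real.log (γh-y) := by
      have e1 : x * x = (βh*y-1)/(lamh*(γh-y)) := by
        rw [eq_div_iff (by positivity)]
        linear_combination hgx2
      calc Real.log x + Real.log x = Real.log (x*x) := (Real.log_mul hx0.ne' hx0.ne').symm
        _ = _ := by
            rw [e1, Real.log_div hl1.ne' (by positivity), Real.log_mul hlam.ne' hl2.ne', hV]
            ring
    have h := H x hx x hx
    rw [hgx'] at h
    simp only [thetaP, omegaP] at h
    have h2 : K * Real.log y + L =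
        2*β*(y-1)*(y+(q:ℝ)-1)/(y*(β-1)*(β+(q:ℝ)-1)) -
          (1+βh*γh-βh*y-γh/y)/(1-βh*γh) *
            (K*(Real.log (βh*y-1) - V - Real.log (γh-y)) + 2*L) := by
      linear_combination h - ((1+βh*γh-βh*y-γh/y)/(1-βh*γh))*K*hW
    have hy0' : (0:ℝ) < y := by linarith
    have hne1 : (1:ℝ) - βh*γh ≠ 0 := by nlinarith
    have hθ : 2*β*(y-1)*(y+(q:ℝ)-1)/(y*(β-1)*(β+(q:ℝ)-1)) * ((βh*γh-1)*y)
        = cp*((y-1)*(y+(q:ℝ)-1)) := by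
      rw [hcp_def]; field_simp
    have hω : (1+βh*γh-βh*y-γh/y)/(1-βh*γh) * ((βh*γh-1)*y) = -((βh*y-1)*(γh-y)) := by
      field_simp; ring
    simp only [myF0]
    linear_combination ((βh*γh-1)*y)*h2 + hθ -
      (K*(Real.log (βh*y-1) - V - Real.log (γh-y)) + 2*L)*hω
  -- derivative chain
  have hbnd : ∀ y ∈ Set.Ioo (g lo) (g hi), 0 < y ∧ 0 < βh*y-1 ∧ 0 < γh-y := by
    rintro y ⟨hy0, hy1⟩
    have hy_gt1 : 1 < y := lt_trans hB0 hy0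
    have hyG : y < γh := lt_trans hy1 hB1G
    exact ⟨by linarith, by nlinarith, by linarith⟩
  have E1 : ∀ y ∈ Set.Ioo (g lo) (g hi), myF1 βh γh K L V cp (q:ℝ) y = 0 := by
    intro y hy
    obtain ⟨c1, c2, c3⟩ := hbnd y hy
    have hd := myF0_deriv βh γh K L V cp (q:ℝ) c1 c2 c3
    have h0 : HasDerivAt (myF0 βh γh K L V cp (q:ℝ)) 0 y := by
      refine (hasDerivAt_const y 0).congr_of_eventuallyEq ?_
      filter_upwards [Ioo_mem_nhds hy.1 hy.2] with z hz
      exact E0 z (Set.Ioo_subset_Icc_self hz)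
    exact hd.unique h0
  have E2 : ∀ y ∈ Set.Ioo (g lo) (g hi), myF2 βh γh K L V cp (q:ℝ) y = 0 := by
    intro y hy
    obtain ⟨c1, c2, c3⟩ := hbnd y hy
    have hd := myF1_deriv βh γh K L V cp (q:ℝ) c1 c2 c3
    have h0 : HasDerivAt (myF1 βh γh K L V cp (q:ℝ)) 0 y := by
      refine (hasDerivAt_const y 0).congr_of_eventuallyEq ?_
      filter_upwards [Ioo_mem_nhds hy.1 hy.2] with z hz
      exact E1 z hz
    exact hd.unique h0
  have E3 : ∀ y ∈ Set.Ioo (g lo) (g hi), myF3 βh γh K L V cp (q:ℝ) y = 0 := by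
    intro y hy
    obtain ⟨c1, c2, c3⟩ := hbnd y hy
    have hd := myF2_deriv βh γh K L V cp (q:ℝ) c1 c2 c3
    have h0 : HasDerivAt (myF2 βh γh K L V cp (q:ℝ)) 0 y := by
      refine (hasDerivAt_const y 0).congr_of_eventuallyEq ?_
      filter_upwards [Ioo_mem_nhds hy.1 hy.2] with z hz
      exact E2 z hz
    exact hd.unique h0
  obtain ⟨m, hm_def⟩ : ∃ m : ℝ, m = (g lo + g hi)/2 := ⟨_, rfl⟩
  have hm : m ∈ Set.Ioo (g lo) (g hi) := by
    constructor <;> (rw [hm_def]; linarith)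
  obtain ⟨cm1, cm2, cm3⟩ := hbnd m hm
  have hm1 : 1 < m := lt_trans hB0 hm.1
  -- K = 0
  have h3 := E3 m hm
  have e3 : myF3 βh γh K L V cp (q:ℝ) m * (m^2*(βh*m-1)^2*(γh-m)^2) =
      K * (βh*(γh-m)^3*(2*βh*m-1) + (βh*m-1)*(γh-m)^2*(2*βh^2*m^2+2*βh*m-1)
        + 3*βh*m^2*(βh*m-1)^2*(γh-m) + (βh*m-1)^3*m^2) := by
    simp only [myF3]
    field_simp
    ring
  rw [h3, zero_mul] at e3
  have hM : 0 < βh*(γh-m)^3*(2*βh*m-1) + (βh*m-1)*(γh-m)^2*(2*βh^2*m^2+2*βh*m-1)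
      + 3*βh*m^2*(βh*m-1)^2*(γh-m) + (βh*m-1)^3*m^2 := by
    have hbp : (0:ℝ) < βh := by linarith
    have t1 : 0 < βh*(γh-m)^3*(2*βh*m-1) :=
      mul_pos (mul_pos hbp (pow_pos cm3 3)) (by nlinarith)
    have t2 : 0 < (βh*m-1)*(γh-m)^2*(2*βh^2*m^2+2*βh*m-1) :=
      mul_pos (mul_pos cm2 (pow_pos cm3 2)) (by nlinarith)
    have t3 : 0 < 3*βh*m^2*(βh*m-1)^2*(γh-m) :=
      mul_pos (mul_pos (mul_pos (by linarith : (0:ℝ) < 3*βh) (pow_pos cm1 2)) (pow_pos cm2 2)) cm3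
    have t4 : 0 < (βh*m-1)^3*m^2 := mul_pos (pow_pos cm2 3) (pow_pos cm1 2)
    linarith
  have hK : K = 0 := by
    rcases mul_eq_zero.1 e3.symm with h | h
    · exact h
    · exact absurd h hM.ne'
  -- L contradiction
  have h2m := E2 m hm
  have h1m := E1 m hm
  rw [hK] at h2m h1m
  simp only [myF1, myF2] at h2m h1m
  have eq2 : 2*cp - 4*L*βh = 0 := by
    have := h2m
    field_simp at this
    linear_combination -h2m
  have eq1 : cp*((m+(q:ℝ)-1)+(m-1)) - (βh*γh-1)*L + 2*L*(βh*(γh-m)-(βh*m-1)) = 0 := by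
    linear_combination -h1m
  have eqc : cp*((q:ℝ)-2) + L*(βh*γh+3) = 0 := by
    linear_combination eq1 - m*eq2
  have hpos : 0 < 2*βh*((q:ℝ)-2) + βh*γh + 3 := by
    nlinarith [mul_pos (by linarith : (0:ℝ) < βh) (by linarith : (0:ℝ) < (q:ℝ)-2)]
  have hzero : L * (2*βh*((q:ℝ)-2) + βh*γh + 3) = 0 := by
    linear_combination eqc - (((q:ℝ)-2)/2)*eq2
  rcases mul_eq_zero.1 hzero with hL0 | hb0
  · rw [hL0] at eq2
    linarith
  · linarith
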